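/- Fix an even positive integer k. For every finite simple graph H there exists a finite chordal graph G such that G^k contains an induced subgraph isomorphic to H. -/

import Mathlib

open SimpleGraph

variable {V : Type*}

/-- The `k`-th power of a graph: distinct vertices are adjacent iff their distance is at most `k`. -/
def SimpleGraph.power (G : SimpleGraph V) (k : ℕ) : SimpleGraph V where
  Adj u v := u ≠ v ∧ G.Reachable u v ∧ G.dist u v ≤ k
  symm := by
    refine ⟨?_⟩
    rintro u v ⟨h1, h2, h3⟩
    exact ⟨h1.symm, h2.symm, by rwa [SimpleGraph.dist_comm]⟩
  loopless := ⟨fun u h => h.1 rfl⟩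

/-- A set of vertices is independent if it is pairwise non-adjacent. -/
def SimpleGraph.IsIndepSetOn (G : SimpleGraph V) (s : Set V) : Prop :=
  s.Pairwise fun u v => ¬ G.Adj u v

/-- The independence number of the subgraph of `G` induced by `X`. -/
noncomputable def indepNumOn (G : SimpleGraph V) (X : Set V) : ℕ :=
  sSup {n | ∃ S : Finset V, ↑S ⊆ X ∧ G.IsIndepSetOn ↑S ∧ S.card = n}

/-- `(T, X)` is a tree decomposition of `G`. -/
structure IsTreeDecompOn {ι : Type*} (G : SimpleGraph V) (T : SimpleGraph ι) (X : ι → Set V) :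
    Prop where
  isTree : T.IsTree
  exists_bag : ∀ v : V, ∃ t, v ∈ X t
  exists_bag_edge : ∀ ⦃u v : V⦄, G.Adj u v → ∃ t, u ∈ X t ∧ v ∈ X t
  subtree_connected : ∀ v : V, (T.induce {t | v ∈ X t}).Connected

/-- The independence number of a tree decomposition with bags `X`. -/
noncomputable def decompIndepNum {ι : Type*} (G : SimpleGraph V) (X : ι → Set V) : ℕ :=
  ⨆ t, indepNumOn G (X t)

/-- The tree-independence number: the minimum independence number over all tree decompositions. -/
noncomputable def treeIndepNum (G : SimpleGraph V) : ℕ :=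
  sInf {n | ∃ (ι : Type) (T : SimpleGraph ι) (X : ι → Set V),
    Finite ι ∧ IsTreeDecompOn G T X ∧ decompIndepNum G X = n}

/-- The graph `G(ℋ)` on the index set of a family of (vertex sets of) subgraphs of `G`:
two distinct indices are adjacent iff the subgraphs share a vertex or are joined by an edge. -/
def packingGraph {J : Type*} (G : SimpleGraph V) (S : J → Set V) : SimpleGraph J where
  Adj i j := i ≠ j ∧ ((S i ∩ S j).Nonempty ∨ ∃ u ∈ S i, ∃ v ∈ S j, G.Adj u v)
  symm := by
    refine ⟨?_⟩
    rintro i j ⟨hne, h⟩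
    refine ⟨hne.symm, ?_⟩
    rcases h with ⟨x, hx⟩ | ⟨u, hu, v, hv, huv⟩
    · exact Or.inl ⟨x, hx.2, hx.1⟩
    · exact Or.inr ⟨v, hv, u, hu, huv.symm⟩
  loopless := ⟨fun i h => h.1 rfl⟩

/-- A graph is chordal if it has no induced cycle of length at least four. -/
def IsChordal (G : SimpleGraph V) : Prop :=
  ∀ n : ℕ, 4 ≤ n → ∀ s : Set V, IsEmpty (G.induce s ≃g cycleGraph n)


section Construction

/-- Edge-vertices: ordered pairs of adjacent vertices. -/
abbrev EV (n : ℕ) (H' : SimpleGraph (Fin n)) : Type := {p : Fin n × Fin n // H'.Adj p.1 p.2}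

/-- The vertex set of the chordal witness graph. -/
abbrev MyV (n m : ℕ) (H' : SimpleGraph (Fin n)) : Type := (Fin n × Fin m) ⊕ EV n H'

def myAdj (n m : ℕ) (H' : SimpleGraph (Fin n)) : MyV n m H' → MyV n m H' → Prop
  | Sum.inl (u, i), Sum.inl (v, j) => u = v ∧ ((i:ℕ) + 1 = j ∨ (j:ℕ) + 1 = i)
  | Sum.inl (u, i), Sum.inr e => (i:ℕ) + 1 = m ∧ (u = e.1.1 ∨ u = e.1.2)
  | Sum.inr e, Sum.inl (u, i) => (i:ℕ) + 1 = m ∧ (u = e.1.1 ∨ u = e.1.2)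
  | Sum.inr e, Sum.inr e' => e ≠ e'

def myG (n m : ℕ) (H' : SimpleGraph (Fin n)) : SimpleGraph (MyV n m H') where
  Adj := myAdj n m H'
  symm := by
    refine ⟨?_⟩
    rintro (⟨u, i⟩ | e) (⟨v, j⟩ | e') h <;> simp only [myAdj] at h ⊢ <;> tauto
  loopless := by
    refine ⟨?_⟩
    rintro (⟨u, i⟩ | e) h <;> simp only [myAdj] at h
    · omega
    · exact h rfl

variable {n m : ℕ} {H' : SimpleGraph (Fin n)}

lemma power_adj_iff' {V : Type*} {G : SimpleGraph V} {k : ℕ} {u v : V} :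
    (G.power k).Adj u v ↔ u ≠ v ∧ G.Reachable u v ∧ G.dist u v ≤ k := Iff.rfl

lemma myG_adj {x y : MyV n m H'} : (myG n m H').Adj x y ↔ myAdj n m H' x y := Iff.rfl

open Classical in
noncomputable def pot (n m : ℕ) (H' : SimpleGraph (Fin n)) (v0 : Fin n) : MyV n m H' → ℕ
  | Sum.inl (w, i) =>
      if w = v0 then (i : ℕ)
      else if H'.Adj w v0 then 2 * m - i
      else 2 * m + 1 - i
  | Sum.inr e => if e.1.1 = v0 ∨ e.1.2 = v0 then m else m + 1

lemma pot_lip (v0 : Fin n) {x y : MyV n m H'} (h : (myG n m H').Adj x y) :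
    pot n m H' v0 x ≤ pot n m H' v0 y + 1 := by
  obtain (⟨u, i⟩ | e) := x <;> obtain (⟨v, j⟩ | e') := y <;>
      simp only [myG, myAdj, pot] at h ⊢
  · obtain ⟨rfl, hij⟩ := h
    have hi := i.isLt; have hj := j.isLt
    split_ifs <;> omega
  · obtain ⟨him, hu⟩ := h
    have hi := i.isLt
    have he := e'.2
    split_ifs with h1 h2 h3 h4 h5 <;> try omega
    exfalso
    rcases hu with rfl | rfl <;> rcases h5 with h5 | h5 <;>
      first
        | exact h1 h5
        | exact h3 (h5 ▸ he)
        | exact h3 (H'.adj_symm (h5 ▸ he))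
  · obtain ⟨hjm, hv⟩ := h
    have hj := j.isLt
    have he := e.2
    split_ifs <;> omega
  · split_ifs <;> omega

lemma walk_ge_aux (v0 : Fin n) {x y : MyV n m H'}
    (p : (myG n m H').Walk x y) : pot n m H' v0 x ≤ p.length + pot n m H' v0 y := by
  induction p with
  | nil => simp
  | cons h q ih =>
    have := pot_lip v0 h
    simp only [Walk.length_cons]
    omega

lemma walk_ge (hm : 0 < m) (v0 : Fin n) {x : MyV n m H'}
    (p : (myG n m H').Walk x (Sum.inl (v0, ⟨0, hm⟩))) : pot n m H' v0 x ≤ p.length := by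
  have := walk_ge_aux v0 p
  simpa [pot] using this

lemma walk_up (hm : 0 < m) (w : Fin n) :
    ∀ (i : ℕ) (h : i < m),
      ∃ p : (myG n m H').Walk (Sum.inl (w, ⟨0, hm⟩)) (Sum.inl (w, ⟨i, h⟩)), p.length = i := by
  intro i
  induction i with
  | zero => exact fun h => ⟨Walk.nil, rfl⟩
  | succ i ih =>
    intro h
    obtain ⟨p, hp⟩ := ih (by omega)
    have ha : (myG n m H').Adj (Sum.inl (w, ⟨i, by omega⟩)) (Sum.inl (w, ⟨i+1, h⟩)) := by
      rw [myG_adj]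
      exact ⟨rfl, Or.inl rfl⟩
    exact ⟨p.concat ha, by rw [Walk.length_concat, hp]⟩

lemma power_adj (hm : 0 < m) (u v : Fin n) :
    ((myG n m H').power (2*m)).Adj (Sum.inl (u, ⟨0, hm⟩)) (Sum.inl (v, ⟨0, hm⟩)) ↔
      H'.Adj u v := by
  constructor
  · intro hpow
    obtain ⟨hne, hreach, hdist⟩ := power_adj_iff'.1 hpow
    by_contra hnadj
    have huv : u ≠ v := fun h => hne (by rw [h])
    obtain ⟨p, hp⟩ := hreach.exists_walk_length_eq_dist
    have hge := walk_ge hm v p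
    simp only [pot, if_neg huv, if_neg hnadj] at hge
    omega
  · intro hA
    have hne : (Sum.inl (u, ⟨0,hm⟩) : MyV n m H') ≠ Sum.inl (v, ⟨0,hm⟩) := by
      intro h
      simp only [Sum.inl.injEq, Prod.mk.injEq] at h
      exact H'.irrefl (v := u) (h.1 ▸ hA)
    have hmlt : m - 1 < m := by omega
    obtain ⟨p1, hp1⟩ := walk_up (H' := H') hm u (m-1) hmlt
    obtain ⟨p2, hp2⟩ := walk_up (H' := H') hm v (m-1) hmlt
    have a1 : (myG n m H').Adj (Sum.inl (u, ⟨m-1, hmlt⟩)) (Sum.inr ⟨(u, v), hA⟩) := by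
      rw [myG_adj]
      refine ⟨?_, Or.inl rfl⟩
      show m - 1 + 1 = m
      omega
    have a2 : (myG n m H').Adj (Sum.inr ⟨(u, v), hA⟩) (Sum.inl (v, ⟨m-1, hmlt⟩)) := by
      rw [myG_adj]
      refine ⟨?_, Or.inr rfl⟩
      show m - 1 + 1 = m
      omega
    set q := ((p1.concat a1).concat a2).append p2.reverse with hq
    have hlen : q.length = 2*m := by
      simp only [hq, Walk.length_append, Walk.length_concat, Walk.length_reverse, hp1, hp2]
      omega
    exact power_adj_iff'.2 ⟨hne, ⟨q⟩, le_trans (SimpleGraph.dist_le q) (by omega)⟩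

end Construction

open scoped Fin.NatCast Fin.CommRing

section FinHelpers

variable {N' : ℕ}

lemma fvlt {a : ℕ} (h : a < N'+4) : ((a : Fin (N'+4))).val = a := Fin.val_cast_of_lt h

lemma fcast_inj {a b : ℕ} (ha : a < N'+4) (hb : b < N'+4) :
    (a : Fin (N'+4)) = (b : Fin (N'+4)) ↔ a = b := by
  constructor
  · intro h
    have := congrArg Fin.val h
    rwa [fvlt ha, fvlt hb] at this
  · rintro rfl; rfl

lemma cyc_adj {i j : Fin (N'+4)} (h : (cycleGraph (N'+4)).Adj i j) : i = j + 1 ∨ j = i + 1 := by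
  rw [cycleGraph_adj'] at h
  have h1 : ((1 : Fin (N'+4))).val = 1 := Fin.val_one _
  rcases h with h | h
  · left
    have h2 : i - j = 1 := Fin.ext (by omega)
    rw [sub_eq_iff_eq_add] at h2
    exact h2.trans (add_comm _ _)
  · right
    have h2 : j - i = 1 := Fin.ext (by omega)
    rw [sub_eq_iff_eq_add] at h2
    exact h2.trans (add_comm _ _)

lemma cyc_adj_succ (i : Fin (N'+4)) : (cycleGraph (N'+4)).Adj i (i + 1) := by
  rw [cycleGraph_adj']
  right
  have h2 : i + 1 - i = 1 := by ring
  rw [h2, Fin.val_one]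

lemma cast_wrap {N' : ℕ} : ((N' + 3 + 1 : ℕ) : Fin (N'+4)) = 0 := by
  exact Fin.natCast_self _

lemma cast_succ (j : ℕ) : ((j + 1 : ℕ) : Fin (N'+4)) = (j : Fin (N'+4)) + 1 := by
  push_cast; ring

end FinHelpers

lemma myG_chordal (n m : ℕ) (H' : SimpleGraph (Fin n)) : IsChordal (myG n m H') := by
  intro N hN s
  obtain ⟨N', rfl⟩ : ∃ N', N = N' + 4 := ⟨N - 4, by omega⟩
  refine ⟨fun φ => ?_⟩
  set c : Fin (N'+4) → MyV n m H' := fun i => ((φ.symm i : s) : MyV n m H') with hc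
  have hinj : Function.Injective c := fun i j h => φ.symm.injective (Subtype.ext h)
  have hadj : ∀ i j : Fin (N'+4),
      (myG n m H').Adj (c i) (c j) ↔ (cycleGraph (N'+4)).Adj i j :=
    fun i j => φ.symm.map_adj_iff
  have hT2 : ∀ i j : Fin (N'+4), i ≠ j → (∃ e, c i = Sum.inr e) → (∃ e', c j = Sum.inr e') →
      (cycleGraph (N'+4)).Adj i j := by
    rintro i j hij ⟨e, he⟩ ⟨e', he'⟩
    rw [← hadj, he, he', myG_adj]
    show e ≠ e'
    rintro rfl
    exact hij (hinj (he.trans he'.symm))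
  by_cases hT : ∃ t, ∃ e, c t = Sum.inr e
  · -- at least one clique vertex on the cycle
    obtain ⟨t0, ht0⟩ := hT
    have hfar : ∀ x : Fin (N'+4), (∃ e, c x = Sum.inr e) →
        ¬ (∃ e, c (x + ((N'+2:ℕ) : Fin (N'+4))) = Sum.inr e) := by
      intro x hx hx2
      have hne : x + ((N'+2:ℕ) : Fin (N'+4)) ≠ x := by
        intro h
        rw [add_eq_left] at h
        have := congrArg Fin.val h
        rw [fvlt (by omega)] at this
        simp at this
      have had := cyc_adj (hT2 _ _ hne hx2 hx)
      rcases had with h | h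
      · have := add_left_cancel h
        have := congrArg Fin.val this
        rw [fvlt (by omega), Fin.val_one] at this
        omega
      · rw [add_assoc] at h
        nth_rewrite 1 [show x = x + 0 from (add_zero x).symm] at h
        have h2 := add_left_cancel h
        rw [← cast_succ] at h2
        have := congrArg Fin.val h2.symm
        rw [fvlt (by omega)] at this
        simp at this
    have hpick : ∃ t, (∃ e, c t = Sum.inr e) ∧
        ¬ (∃ e, c (t + ((N'+3:ℕ) : Fin (N'+4))) = Sum.inr e) := by
      by_cases h : ∃ e, c (t0 + ((N'+3:ℕ) : Fin (N'+4))) = Sum.inr e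
      · refine ⟨t0 + ((N'+3:ℕ) : Fin (N'+4)), h, ?_⟩
        have harith : t0 + ((N'+3:ℕ) : Fin (N'+4)) + ((N'+3:ℕ) : Fin (N'+4))
            = t0 + ((N'+2:ℕ) : Fin (N'+4)) := by
          rw [add_assoc, ← Nat.cast_add]
          congr 1
          rw [show (N'+3) + (N'+3) = (N'+4) + (N'+2) by ring, Nat.cast_add, Fin.natCast_self,
            zero_add]
        rw [harith]
        exact hfar t0 ht0
      · exact ⟨t0, ht0, h⟩
    obtain ⟨t, htT, htm⟩ := hpick
    have hTsub : ∀ i, (∃ e, c i = Sum.inr e) → i = t ∨ i = t + 1 := by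
      intro i hi
      by_cases hit : i = t
      · exact Or.inl hit
      · rcases cyc_adj (hT2 i t hit hi htT) with h | h
        · exact Or.inr h
        · exfalso
          apply htm
          have hieq : i = t + ((N'+3:ℕ) : Fin (N'+4)) := by
            rw [h, add_assoc, add_comm (1 : Fin (N'+4)), ← cast_succ, cast_wrap, add_zero]
          rw [← hieq]
          exact hi
    obtain ⟨b, hbcases⟩ : ∃ b : ℕ, (b = 2 ∧ (∃ e, c (t + 1) = Sum.inr e)) ∨
        (b = 1 ∧ ¬ (∃ e, c (t + 1) = Sum.inr e)) := by
      by_cases h : ∃ e, c (t + 1) = Sum.inr e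
      · exact ⟨2, Or.inl ⟨rfl, h⟩⟩
      · exact ⟨1, Or.inr ⟨rfl, h⟩⟩
    have hb12 : 1 ≤ b ∧ b ≤ 2 := by rcases hbcases with ⟨h,-⟩|⟨h,-⟩ <;> omega
    have hblock : ∀ j : ℕ, j < N'+4 - b →
        ∃ w' a', c (t + ((b + j : ℕ) : Fin (N'+4))) = Sum.inl (w', a') := by
      intro j hj
      rcases hcj : c (t + ((b+j:ℕ) : Fin (N'+4))) with wa | e
      · exact ⟨wa.1, wa.2, rfl⟩
      · exfalso
        rcases hTsub _ ⟨e, hcj⟩ with h | h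
        · rw [add_eq_left] at h
          have := congrArg Fin.val h
          rw [fvlt (by omega)] at this
          simp at this
          omega
        · rw [show (1 : Fin (N'+4)) = ((1:ℕ) : Fin (N'+4)) by norm_num] at h
          have h2 := add_left_cancel h
          rw [fcast_inj (by omega) (by omega)] at h2
          -- b + j = 1, so b = 1 and j = 0, position is t+1
          rcases hbcases with ⟨hb2, hTt1⟩ | ⟨hb1, hnT⟩
          · omega
          · apply hnT
            refine ⟨e, ?_⟩
            rw [← hcj]
            congr 1
            rw [show ((b + j : ℕ) : Fin (N'+4)) = ((1:ℕ) : Fin (N'+4)) by rw [h2]]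
            norm_num
    obtain ⟨w0, a0, h0⟩ := hblock 0 (by omega)
    have hchain : ∀ j : ℕ, j < N'+4 - b →
        ∃ a', c (t + ((b + j : ℕ) : Fin (N'+4))) = Sum.inl (w0, a') := by
      intro j hj
      induction j with
      | zero => exact ⟨a0, h0⟩
      | succ j ih =>
        obtain ⟨aj, hj'⟩ := ih (by omega)
        obtain ⟨w', a', h'⟩ := hblock (j+1) hj
        refine ⟨a', ?_⟩
        have hadj' := (hadj _ _).2 (cyc_adj_succ (t + ((b+j:ℕ) : Fin (N'+4))))
        have hpos : t + ((b+j:ℕ) : Fin (N'+4)) + 1 = t + ((b+(j+1) : ℕ) : Fin (N'+4)) := by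
          rw [show (b+(j+1) : ℕ) = (b+j)+1 by ring, cast_succ, ← add_assoc]
        rw [hpos, hj', h', myG_adj] at hadj'
        obtain ⟨hw, -⟩ := hadj'
        rw [h', ← hw]
    obtain ⟨aF, hF⟩ := hchain 0 (by omega)
    obtain ⟨aL, hL⟩ := hchain (N'+3-b) (by omega)
    obtain ⟨et, het⟩ := htT
    -- last arc vertex is adjacent to c t (an inr), so it is a top
    have hposL : t + ((b + (N'+3-b) : ℕ) : Fin (N'+4)) + 1 = t := by
      rw [show (b + (N'+3-b) : ℕ) = N'+3 by omega, add_assoc, ← cast_succ, cast_wrap, add_zero]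
    have haL : ((aL : ℕ)) + 1 = m := by
      have hadj' := (hadj _ _).2 (cyc_adj_succ (t + ((b + (N'+3-b) : ℕ) : Fin (N'+4))))
      rw [hposL, hL, het, myG_adj] at hadj'
      exact hadj'.1
    -- first arc vertex is adjacent to an inr (at t if b = 1, at t+1 if b = 2), so it is a top
    have haF : ((aF : ℕ)) + 1 = m := by
      rcases hbcases with ⟨hb2, e1, he1⟩ | ⟨hb1, -⟩
      · have hpos : t + 1 + 1 = t + ((b + 0 : ℕ) : Fin (N'+4)) := by
          subst hb2
          rw [add_assoc, show ((2 + 0 : ℕ) : Fin (N'+4)) = 1 + 1 by push_cast; ring]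
        have hadj' := (hadj _ _).2 (cyc_adj_succ (t + 1))
        rw [hpos, he1, hF, myG_adj] at hadj'
        exact hadj'.1
      · have hpos : t + 1 = t + ((b + 0 : ℕ) : Fin (N'+4)) := by
          subst hb1
          rw [show ((1 + 0 : ℕ) : Fin (N'+4)) = 1 by norm_num]
        have hadj' := (hadj _ _).2 (cyc_adj_succ t)
        rw [hpos, het, hF, myG_adj] at hadj'
        exact hadj'.1
    -- hence the two endpoints of the arc are equal, contradiction
    have hFL : c (t + ((b + 0 : ℕ) : Fin (N'+4))) = c (t + ((b + (N'+3-b) : ℕ) : Fin (N'+4))) := by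
      rw [hF, hL]
      congr 2
      exact Fin.ext (by omega)
    have := hinj hFL
    have h2 := add_left_cancel this
    rw [fcast_inj (by omega) (by omega)] at h2
    omega
  · -- no clique vertex on the cycle: all on the forest, impossible
    push_neg at hT
    have hall : ∀ i, ∃ w : Fin n, ∃ a : Fin m, c i = Sum.inl (w, a) := by
      intro i
      rcases h : c i with ⟨w, a⟩ | e
      · exact ⟨w, a, rfl⟩
      · exact absurd h (hT i e)
    choose w a hwa using hall
    have hstep : ∀ i, w (i+1) = w i ∧
        (((a (i+1) : ℕ)) + 1 = a i ∨ ((a i : ℕ)) + 1 = a (i+1)) := by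
      intro i
      have h' := (hadj i (i+1)).2 (cyc_adj_succ i)
      rw [hwa i, hwa (i+1), myG_adj] at h'
      obtain ⟨h1, h2⟩ := h'
      exact ⟨h1.symm, by omega⟩
    have hsame : ∀ j : ℕ, w ((j : Fin (N'+4))) = w ((0:ℕ) : Fin (N'+4)) := by
      intro j
      induction j with
      | zero => rfl
      | succ j ih => rw [cast_succ, (hstep _).1, ih]
    have hsame' : ∀ i, w i = w ((0:ℕ) : Fin (N'+4)) := fun i => by
      have := hsame i.val
      rwa [Fin.cast_val_eq_self] at this
    have hainj : ∀ i j, ((a i : ℕ)) = a j → i = j := by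
      intro i j hij
      apply hinj
      rw [hwa i, hwa j, hsame' i, hsame' j]
      congr 2
      exact Fin.ext hij
    obtain ⟨i0, hmax⟩ := Finite.exists_max (fun i => (a i : ℕ))
    have s1 := (hstep i0).2
    have s2 := (hstep (i0 + ((N'+3 : ℕ) : Fin (N'+4)))).2
    have hkey : i0 + ((N'+3 : ℕ) : Fin (N'+4)) + 1 = i0 := by
      rw [add_assoc, ← cast_succ, cast_wrap, add_zero]
    rw [hkey] at s2
    have m1 := hmax (i0 + 1)
    have m2 := hmax (i0 + ((N'+3:ℕ) : Fin (N'+4)))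
    have hne : i0 + ((N'+3:ℕ) : Fin (N'+4)) ≠ i0 + 1 := by
      intro h
      have h2 := add_left_cancel h
      rw [show (1 : Fin (N'+4)) = ((1:ℕ) : Fin (N'+4)) by norm_num] at h2
      rw [fcast_inj (by omega) (by omega)] at h2
      omega
    exact hne (hainj _ _ (by omega))

theorem stmt_5 (k : ℕ) (hk : 0 < k) (hke : Even k)
    {W : Type*} [Fintype W] (H : SimpleGraph W) :
    ∃ (V : Type) (_ : Fintype V) (G : SimpleGraph V),
      IsChordal G ∧ ∃ s : Set V, Nonempty ((G.power k).induce s ≃g H) := by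
  obtain ⟨m, rfl⟩ := hke
  have hm : 0 < m := by omega
  rw [show m + m = 2 * m by ring]
  set nW := Fintype.card W with hnW
  let e : W ≃ Fin nW := Fintype.equivFin W
  let H' : SimpleGraph (Fin nW) :=
    { Adj := fun i j => H.Adj (e.symm i) (e.symm j)
      symm := ⟨fun i j h => H.adj_symm h⟩
      loopless := ⟨fun i h => H.irrefl h⟩ }
  let ι : Fin nW → MyV nW m H' := fun w => Sum.inl (w, ⟨0, hm⟩)
  have hιinj : Function.Injective ι := by
    intro x y h
    simp only [ι, Sum.inl.injEq, Prod.mk.injEq] at h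
    exact h.1
  refine ⟨MyV nW m H', Fintype.ofFinite _, myG nW m H', myG_chordal nW m H',
    Set.range ι, ⟨⟨(Equiv.ofInjective ι hιinj).symm.trans e.symm, ?_⟩⟩⟩
  intro x y
  have hx : ι ((Equiv.ofInjective ι hιinj).symm x) = ↑x := Equiv.apply_ofInjective_symm hιinj x
  have hy : ι ((Equiv.ofInjective ι hιinj).symm y) = ↑y := Equiv.apply_ofInjective_symm hιinj y
  set u := (Equiv.ofInjective ι hιinj).symm x with hu
  set v := (Equiv.ofInjective ι hιinj).symm y with hv
  show H.Adj (e.symm u) (e.symm v) ↔ _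
  constructor
  · intro h
    show ((myG nW m H').power (2*m)).Adj ↑x ↑y
    rw [← hx, ← hy]
    exact (power_adj hm u v).2 h
  · intro h
    have h2 : ((myG nW m H').power (2*m)).Adj (ι u) (ι v) := by
      rw [hx, hy]
      exact h
    exact (power_adj hm u v).1 h2
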